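/- arXiv:2407.20782 — 2 statements merged into one kernel-verified Lean document; each statement's English description precedes it below -/
import Mathlib

section
/- Let Σ be a finite alphabet, let v ∈ Σ* be nonempty, and let w ∈ Σ*. Define the directed graph G with vertex set {0, 1, …, |v|} and an edge i → j whenever w = v[i..|v|] · v^ℓ · v[0..j] for some ℓ ≥ 0 or w = v[i..j]. Then for every n ≥ 1 and all i, j ∈ {0, …, |v|}: the word w^n equals v[i..|v|] · v^ℓ · v[0..j] for some ℓ ≥ 0 or equals v[i..j], if and only if there is a directed path of length n from i to j in G. -/
namespace Paper

/-- `wpow w n` is the word `w` repeated `n` times. -/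
def wpow {α : Type} (w : List α) (n : ℕ) : List α := (List.replicate n w).flatten

/-- The factor `u[i..j]`: the word `a_{i+1} ⋯ a_j` if `i < j`, and `ε` if `j ≤ i`. -/
def factor {α : Type} (u : List α) (i j : ℕ) : List α := (u.take j).drop i

/-- A succinct-NFA over the alphabet `α` with (finitely many) states `Q`:
an initial state, a set of final states, and a finite set of succinct transitions
`(p, w, n, p')`, where the transition reads the word `w^n`. -/
structure SNFA (α Q : Type) where
  init : Q
  final : Set Q
  trans : Set (Q × List α × ℕ × Q)
  finTrans : trans.Finite

variable {α Q : Type}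

/-- `Reads A p u p'`: there is a run of the succinct-NFA `A` from state `p` to state
`p'` reading the word `u` (that is, `u = w₁^{n₁} ⋯ w_t^{n_t}` along a sequence of
consecutive transitions). -/
inductive Reads (A : SNFA α Q) : Q → List α → Q → Prop
  | nil (p : Q) : Reads A p [] p
  | cons {p p' p'' : Q} {w : List α} {n : ℕ} {u : List α} :
      (p, w, n, p') ∈ A.trans → Reads A p' u p'' → Reads A p (wpow w n ++ u) p''

/-- `L(A)`: the set of words read by accepting runs of `A`. -/
def SNFA.language (A : SNFA α Q) : Set (List α) :=
  { u | ∃ f ∈ A.final, Reads A A.init u f }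

/-- The succinct-NFA `A′` built from `A` and a nonempty word `v`: states `Q × {0, …,
|v|−1}`, initial state `(q₀, 0)`, final states `F × {0}`, and a transition
`((p, i), w, n, (p′, j))` whenever `(p, w, n, p′) ∈ δ` and either
`w^n = v[i..|v|] · v^ℓ · v[0..j]` for some `ℓ ≥ 0`, or `w^n = v[i..j]`. -/
def SNFA.primed (A : SNFA α Q) (v : List α) (hv : 0 < v.length) :
    SNFA α (Q × Fin v.length) where
  init := (A.init, ⟨0, hv⟩)
  final := { s | s.1 ∈ A.final ∧ s.2 = ⟨0, hv⟩ }
  trans := { t | ∃ (p : Q) (i : Fin v.length) (w : List α) (n : ℕ) (p' : Q)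
        (j : Fin v.length),
      t = ((p, i), w, n, (p', j)) ∧ (p, w, n, p') ∈ A.trans ∧
      ((∃ l, wpow w n = v.drop i.val ++ wpow v l ++ v.take j.val) ∨
        wpow w n = factor v i.val j.val) }
  finTrans := by
    have hfin : ((A.trans ×ˢ (Set.univ : Set (Fin v.length × Fin v.length))).image
        (fun x : (Q × List α × ℕ × Q) × (Fin v.length × Fin v.length) =>
          (((x.1.1, x.2.1), x.1.2.1, x.1.2.2.1, (x.1.2.2.2, x.2.2)) :
            (Q × Fin v.length) × List α × ℕ × (Q × Fin v.length)))).Finite :=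
      (A.finTrans.prod (Set.finite_univ)).image _
    apply Set.Finite.subset hfin
    rintro t ⟨p, i, w, n, p', j, rfl, ht, -⟩
    exact ⟨((p, w, n, p'), (i, j)), ⟨ht, trivial⟩, rfl⟩


/-- The edge relation of the graph `G` on vertices `{0, …, |v|}`: an edge `i → j`
whenever `w = v[i..|v|] · v^ℓ · v[0..j]` for some `ℓ ≥ 0` or `w = v[i..j]`. -/
def edgeRel {α : Type} (v w : List α) (i j : ℕ) : Prop :=
  i ≤ v.length ∧ j ≤ v.length ∧
    ((∃ l : ℕ, w = v.drop i ++ wpow v l ++ v.take j) ∨ w = factor v i j)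

/-- A directed path of length `n` from `i` to `j`: a sequence of `n` consecutive
edges starting at `i` and ending at `j`. -/
def pathLen (r : ℕ → ℕ → Prop) : ℕ → ℕ → ℕ → Prop
  | 0, i, j => i = j
  | n + 1, i, j => ∃ k, r i k ∧ pathLen r n k j

section AuxLemmas
open List


lemma wpow_zero (w : List α) : wpow w 0 = [] := rfl

lemma wpow_succ (w : List α) (n : ℕ) : wpow w (n + 1) = w ++ wpow w n := by
  simp [wpow, List.replicate_succ]

lemma wpow_add (w : List α) (a b : ℕ) : wpow w (a + b) = wpow w a ++ wpow w b := by
  induction a with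
  | zero => simp [wpow]
  | succ a ih => rw [Nat.succ_add, wpow_succ, wpow_succ, ih, List.append_assoc]

lemma wpow_length (w : List α) (n : ℕ) : (wpow w n).length = n * w.length := by
  induction n with
  | zero => simp [wpow]
  | succ n ih => rw [wpow_succ, List.length_append, ih]; ring

/-- The pattern predicate. -/
def Pat (v w : List α) (i j : ℕ) : Prop :=
  (∃ l : ℕ, w = v.drop i ++ wpow v l ++ v.take j) ∨ w = factor v i j

lemma pat_nil {v : List α} (hv : 0 < v.length) {i j : ℕ} (hj : j ≤ v.length) :
    Pat v [] i j ↔ j ≤ i := by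
  constructor
  · rintro (⟨l, hl⟩ | hf)
    · have h1 : v.take j = [] := (List.append_eq_nil_iff.mp hl.symm).2
      rcases List.take_eq_nil_iff.mp h1 with h | h
      · omega
      · rw [h] at hv; simp at hv
    · have := congrArg List.length hf
      simp only [factor, List.length_drop, List.length_take, List.length_nil] at this
      omega
  · intro h
    refine Or.inr ?_
    rw [factor, List.drop_eq_nil_of_le (by simp; omega)]

lemma pat_nil' {v : List α} {i j : ℕ} (hj : j ≤ i) : Pat v [] i j := by
  refine Or.inr ?_
  rw [factor, List.drop_eq_nil_of_le (by simp; omega)]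



lemma split_tail {v : List α} (hv : 0 < v.length) {j : ℕ} (hj : j ≤ v.length) :
    ∀ l r : ℕ, r ≤ l * v.length + j →
      ∃ k ≤ v.length, ∃ q : ℕ,
        (wpow v l ++ v.take j).take r = wpow v q ++ v.take k ∧
        Pat v ((wpow v l ++ v.take j).drop r) k j := by
  intro l
  induction l with
  | zero =>
    intro r hr
    refine ⟨r, by omega, 0, ?_, Or.inr ?_⟩
    · simp [wpow_zero, take_take]; omega
    · simp [wpow_zero, factor, drop_take]
  | succ l ih =>
    intro r hr
    have h0 : wpow v (l + 1) ++ v.take j = v ++ (wpow v l ++ v.take j) := by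
      rw [wpow_succ, append_assoc]
    rcases lt_or_ge r v.length with h | h
    · refine ⟨r, le_of_lt h, 0, ?_, Or.inl ⟨l, ?_⟩⟩
      · rw [h0, take_append_of_le_length (le_of_lt h), wpow_zero]; rfl
      · rw [h0, drop_append_of_le_length (le_of_lt h), append_assoc]
    · have e1 : (l + 1) * v.length = l * v.length + v.length := by ring
      obtain ⟨k, hk, q, h1, h2⟩ := ih (r - v.length) (by omega)
      refine ⟨k, hk, q + 1, ?_, ?_⟩
      · have hr' : r = v.length + (r - v.length) := by omega
        rw [h0, hr', take_length_add_append, h1, wpow_succ, append_assoc]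
      · have hr' : r = v.length + (r - v.length) := by omega
        rw [h0, hr', drop_length_add_append]
        exact h2

lemma pat_split {v : List α} (hv : 0 < v.length) {w u : List α} {i j : ℕ}
    (hi : i ≤ v.length) (hj : j ≤ v.length) (h : Pat v (w ++ u) i j) :
    ∃ k ≤ v.length, Pat v w i k ∧ Pat v u k j := by
  have hwt : w = (w ++ u).take w.length := by simp
  have hud : u = (w ++ u).drop w.length := by simp
  rcases h with ⟨l, hl⟩ | hf
  · rw [append_assoc] at hl
    rcases le_or_gt w.length (v.length - i) with hw | hw
    · refine ⟨i + w.length, by omega, Or.inr ?_, Or.inl ⟨l, ?_⟩⟩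
      · conv_lhs => rw [hwt]
        rw [hl, take_append_of_le_length (by simp; omega)]
        simp only [factor, drop_take]
        congr 1; omega
      · rw [hud, hl, drop_append_of_le_length (by simp; omega), drop_drop,
          ← append_assoc]
    · set r : ℕ := w.length - (v.length - i) with hrdef
      have hlen := congrArg List.length hl
      simp only [length_append, length_drop, length_take, wpow_length] at hlen
      have hr : r ≤ l * v.length + j := by omega
      obtain ⟨k, hk, q, h1, h2⟩ := split_tail hv hj l r hr
      have hwl : w.length = (v.drop i).length + r := by simp; omega
      refine ⟨k, hk, Or.inl ⟨q, ?_⟩, ?_⟩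
      · conv_lhs => rw [hwt]
        rw [hl, hwl, take_length_add_append, h1, ← append_assoc]
      · rw [hud, hl, hwl, drop_length_add_append]
        exact h2
  · rw [factor] at hf
    have hlen := congrArg List.length hf
    simp only [length_append, length_drop, length_take] at hlen
    refine ⟨min (i + w.length) j, by omega, Or.inr ?_, Or.inr ?_⟩
    · conv_lhs => rw [hwt]
      rw [hf]
      simp only [factor, drop_take, take_take]
      congr 1; omega
    · rw [hud, hf, drop_drop, factor]
      rcases le_or_gt (i + w.length) j with h | h
      · congr 1; omega
      · rw [drop_eq_nil_of_le (by simp; omega), drop_eq_nil_of_le (by simp; omega)]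



lemma pat_comp {v u u' : List α} {i k j : ℕ} (hv : 0 < v.length)
    (hk : k ≤ v.length) (hj : j ≤ v.length)
    (hu : u ≠ []) (hu' : u' ≠ [])
    (h1 : Pat v u i k) (h2 : Pat v u' k j) : Pat v (u ++ u') i j := by
  rcases h1 with ⟨l, e1⟩ | e1 <;> rcases h2 with ⟨m, e2⟩ | e2
  · refine Or.inl ⟨l + 1 + m, ?_⟩
    have h3 : wpow v (l + 1 + m) = wpow v l ++ (v.take k ++ v.drop k) ++ wpow v m := by
      rw [wpow_add, wpow_add, take_append_drop, wpow_succ, wpow_zero, append_nil]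
    rw [e1, e2, h3]
    simp only [append_assoc]
  · have hkj : k < j := by
      by_contra h
      apply hu'
      rw [e2, factor, drop_eq_nil_of_le (by simp; omega)]
    have h3 : v.take k ++ factor v k j = v.take j := by
      rw [factor, show v.take k = (v.take j).take k by rw [take_take]; congr 1; omega,
        take_append_drop]
    refine Or.inl ⟨l, ?_⟩
    rw [e1, e2]
    simp only [append_assoc]
    rw [h3]
  · have hik : i < k := by
      by_contra h
      apply hu
      rw [e1, factor, drop_eq_nil_of_le (by simp; omega)]
    have h3 : factor v i k ++ v.drop k = v.drop i := by
      rw [factor, ← drop_append_of_le_length (show i ≤ (v.take k).length by simp; omega),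
        take_append_drop]
    refine Or.inl ⟨m, ?_⟩
    rw [e1, e2]
    simp only [← append_assoc]
    rw [h3]
  · have hik : i < k := by
      by_contra h
      apply hu
      rw [e1, factor, drop_eq_nil_of_le (by simp; omega)]
    have hkj : k < j := by
      by_contra h
      apply hu'
      rw [e2, factor, drop_eq_nil_of_le (by simp; omega)]
    refine Or.inr ?_
    rw [e1, e2, factor, factor, factor,
      show v.take k = (v.take j).take k by rw [take_take]; congr 1; omega,
      ← drop_append_of_le_length (show i ≤ ((v.take j).take k).length by simp; omega),
      take_append_drop]


open List in
lemma pathLen_nil_le {v : List α} (hv : 0 < v.length) :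
    ∀ n i j, pathLen (edgeRel v ([] : List α)) n i j → j ≤ i := by
  intro n
  induction n with
  | zero => intro i j h; exact le_of_eq h.symm
  | succ n ih =>
    rintro i j ⟨k, he, hp⟩
    exact le_trans (ih k j hp) ((pat_nil hv he.2.1).mp he.2.2)

lemma pathLen_nil_of_le {v : List α} (hv : 0 < v.length) :
    ∀ n, 1 ≤ n → ∀ i j, i ≤ v.length → j ≤ v.length → j ≤ i →
      pathLen (edgeRel v ([] : List α)) n i j := by
  intro n hn
  induction n, hn using Nat.le_induction with
  | base =>
    intro i j hi hj hle
    exact ⟨j, ⟨hi, hj, (pat_nil hv hj).mpr hle⟩, rfl⟩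
  | succ n hn ih =>
    intro i j hi hj hle
    exact ⟨i, ⟨hi, hi, (pat_nil hv hi).mpr le_rfl⟩, ih i j hi hj hle⟩

lemma main_aux {v w : List α} (hv : 0 < v.length) (hw : w ≠ []) :
    ∀ n, 1 ≤ n → ∀ i j, i ≤ v.length → j ≤ v.length →
      (Pat v (wpow w n) i j ↔ pathLen (edgeRel v w) n i j) := by
  intro n hn
  induction n, hn using Nat.le_induction with
  | base =>
    intro i j hi hj
    have h1 : wpow w 1 = w := by simp [wpow]
    rw [h1]
    constructor
    · intro h; exact ⟨j, ⟨hi, hj, h⟩, rfl⟩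
    · rintro ⟨k, he, hk⟩
      have hkj : k = j := hk
      subst hkj
      exact he.2.2
  | succ n hn ih =>
    intro i j hi hj
    have hne : wpow w n ≠ [] := by
      have hp : 0 < (wpow w n).length := by
        rw [wpow_length]
        exact Nat.mul_pos (by omega) (List.length_pos_iff.mpr hw)
      exact List.ne_nil_of_length_pos hp
    rw [wpow_succ]
    constructor
    · intro h
      obtain ⟨k, hk, h1, h2⟩ := pat_split hv hi hj h
      exact ⟨k, ⟨hi, hk, h1⟩, (ih k j hk hj).mp h2⟩
    · rintro ⟨k, he, hp⟩
      exact pat_comp hv he.2.1 hj hw hne he.2.2 ((ih k j he.2.1 hj).mpr hp)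

end AuxLemmas

/-- for every `n ≥ 1` and `i, j ∈ {0, …, |v|}`, the word `w^n`
equals `v[i..|v|] · v^ℓ · v[0..j]` for some `ℓ ≥ 0` or equals `v[i..j]` iff there
is a directed path of length `n` from `i` to `j` in `G`. -/
theorem statement11 {α : Type} [Fintype α] (v : List α) (hv : 0 < v.length)
    (w : List α) (n : ℕ) (hn : 1 ≤ n) (i j : ℕ)
    (hi : i ≤ v.length) (hj : j ≤ v.length) :
    ((∃ l : ℕ, wpow w n = v.drop i ++ wpow v l ++ v.take j) ∨
        wpow w n = factor v i j) ↔
      pathLen (edgeRel v w) n i j := by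
  show Pat v (wpow w n) i j ↔ pathLen (edgeRel v w) n i j
  rcases eq_or_ne w [] with rfl | hw
  · have hwn : wpow ([] : List α) n = [] := by simp [wpow]
    rw [hwn, pat_nil hv hj]
    exact ⟨fun h => pathLen_nil_of_le hv n hn i j hi hj h,
      fun h => pathLen_nil_le hv n i j h⟩
  · exact main_aux hv hw n hn i j hi hj

end Paper
end

section
/- Let q ∈ UCRPQ(SSF, a*) over a finite alphabet Σ and let A ⊆ Σ. Then q is A-bounded if, and only if, q is equivalent to q(A, m) for some m ∈ ℕ. -/
namespace Paper

/-! ## Graph databases -/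

/-- A graph database over the alphabet `α`: a finite set of vertices together with
labelled edges. -/
structure GDB (α : Type) : Type 1 where
  V : Type
  finV : Finite V
  edges : Set (V × α × V)

/-! ## Conjunctive queries -/

/-- A (Boolean) conjunctive query over `α`: a finite set of variables and a set of
atoms `x —a→ y` with `a ∈ α`. -/
structure CQ (α : Type) : Type 1 where
  V : Type
  finV : Finite V
  atoms : Set (V × α × V)

variable {α : Type}

/-- `h` is a homomorphism from the CQ `p` to the CQ `p'`. -/
def CQ.Hom (p p' : CQ α) (h : p.V → p'.V) : Prop :=
  ∀ x a y, (x, a, y) ∈ p.atoms → (h x, a, h y) ∈ p'.atoms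

/-- There is a homomorphism from the CQ `p` to the CQ `p'`. -/
def CQ.homTo (p p' : CQ α) : Prop := ∃ h, p.Hom p' h

/-- There is a homomorphism from the CQ `p` to the graph database `G`. -/
def CQ.homToG (p : CQ α) (G : GDB α) : Prop :=
  ∃ h : p.V → G.V, ∀ x a y, (x, a, y) ∈ p.atoms → (h x, a, h y) ∈ G.edges

/-! ## CRPQs -/

/-- A (Boolean) conjunctive regular path query over alphabet `α` with variables `V`:
a finite conjunction of atoms `src i —lang i→ tgt i`. -/
structure CRPQ (α V : Type) where
  k : ℕ
  src : Fin k → V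
  lang : Fin k → Set (List α)
  tgt : Fin k → V

variable {V : Type}

/-! ## Expansions -/

/-- Variables of an expansion before collapsing equality atoms: the original variables
plus, for each atom `i` expanded by the word `w i`, the fresh variables
`z_1, …, z_{|w i| - 1}`. -/
def RawVar (q : CRPQ α V) (w : Fin q.k → List α) : Type :=
  V ⊕ (Σ i : Fin q.k, Fin ((w i).length - 1))

instance {q : CRPQ α V} [Finite V] {w : Fin q.k → List α} : Finite (RawVar q w) := by
  unfold RawVar; infer_instance

/-- The `j`-th variable (`0 ≤ j ≤ |w i|`) on the path expanding atom `i`: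
position `0` is the source variable, position `|w i|` the target variable, and the
intermediate positions are fresh variables. -/
def node (q : CRPQ α V) (w : Fin q.k → List α) (i : Fin q.k) (j : ℕ) : RawVar q w :=
  if j = 0 then Sum.inl (q.src i)
  else if j = (w i).length then Sum.inl (q.tgt i)
  else if h : j - 1 < (w i).length - 1 then Sum.inr ⟨i, ⟨j - 1, h⟩⟩
  else Sum.inl (q.src i)

/-- The equality atoms produced by `ε`-expansions: `src i = tgt i` whenever `w i = ε`.
(The expansion collapses the equivalence they generate.) -/
def eqRel (q : CRPQ α V) (w : Fin q.k → List α) : RawVar q w → RawVar q w → Prop :=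
  fun x y => ∃ i, w i = [] ∧ x = Sum.inl (q.src i) ∧ y = Sum.inl (q.tgt i)

/-- The expansion of the CRPQ `q` obtained by expanding each atom `i` with the word
`w i`: each atom is replaced by its `w i`-expansion, and equality atoms are collapsed. -/
def expansion (q : CRPQ α V) [Finite V] (w : Fin q.k → List α) : CQ α where
  V := Quot (eqRel q w)
  finV := Finite.of_surjective (Quot.mk _) fun x => Quot.exists_rep x
  atoms := { t | ∃ (i : Fin q.k) (j : ℕ) (hj : j < (w i).length),
    t = (Quot.mk _ (node q w i j), (w i).get ⟨j, hj⟩, Quot.mk _ (node q w i (j + 1))) }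

/-- `Exp q`: the set of all expansions of the CRPQ `q`. -/
def Exp (q : CRPQ α V) [Finite V] : Set (CQ α) :=
  { p | ∃ w : Fin q.k → List α, (∀ i, w i ∈ q.lang i) ∧ p = expansion q w }

/-- `Expm q m`: the set of all `m`-expansions of the CRPQ `q`. -/
def Expm (q : CRPQ α V) [Finite V] (m : ℕ) : Set (CQ α) :=
  { p | ∃ w : Fin q.k → List α,
      (∀ i, w i ∈ q.lang i) ∧ (∀ i, (w i).length ≤ m) ∧ p = expansion q w }

/-! ## UCRPQs, satisfaction, containment, boundedness -/

/-- The set of expansions of a UCRPQ (a finite disjunction of CRPQs). -/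
def ExpU (Q : List (CRPQ α V)) [Finite V] : Set (CQ α) :=
  { p | ∃ q ∈ Q, p ∈ Exp q }

/-- The set of `m`-expansions of a UCRPQ. -/
def ExpmU (Q : List (CRPQ α V)) [Finite V] (m : ℕ) : Set (CQ α) :=
  { p | ∃ q ∈ Q, p ∈ Expm q m }

/-- Satisfaction of a (possibly infinite) disjunction of CQs by a graph database. -/
def SatSet (S : Set (CQ α)) (G : GDB α) : Prop := ∃ p ∈ S, p.homToG G

/-- `G ⊨ Q` for a UCRPQ `Q`: some expansion of `Q` maps homomorphically into `G`. -/
def Sat (Q : List (CRPQ α V)) [Finite V] (G : GDB α) : Prop := SatSet (ExpU Q) G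

/-- Containment of queries (viewed as properties of graph databases):
every graph database satisfying the first satisfies the second. -/
def Contained (P P' : GDB α → Prop) : Prop := ∀ G, P G → P' G

/-- Equivalence of queries (viewed as properties of graph databases). -/
def QEquiv (P P' : GDB α → Prop) : Prop := ∀ G, P G ↔ P' G

/-- A query is bounded iff it is equivalent to some UCQ (finite disjunction of CQs). -/
def Bounded (P : GDB α → Prop) : Prop :=
  ∃ Φ : List (CQ α), ∀ G, P G ↔ ∃ p ∈ Φ, p.homToG G


/-! ## The class UCRPQ(SSF, w*) -/

/-- An atom language in the class (SSF, w*): either a succinct star-free expression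
(denoting a finite language), or `w*` for a word `w`. -/
inductive AtomLang (α : Type) : Type where
  | ssf (L : Set (List α)) (h : L.Finite) : AtomLang α
  | star (w : List α) : AtomLang α

variable {α V : Type}

/-- The language denoted by an atom of the class (SSF, w*). -/
def AtomLang.language : AtomLang α → Set (List α)
  | .ssf L _ => L
  | .star w => { u | ∃ n, u = wpow w n }

/-- A CRPQ all of whose atom languages are SSF expressions or expressions `w*`. -/
structure SCRPQ (α V : Type) where
  k : ℕ
  src : Fin k → V
  lang : Fin k → AtomLang α
  tgt : Fin k → V

/-- The underlying CRPQ of an SCRPQ. -/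
def SCRPQ.toCRPQ (q : SCRPQ α V) : CRPQ α V :=
  ⟨q.k, q.src, fun i => (q.lang i).language, q.tgt⟩

/-- The underlying UCRPQ of a UCRPQ in the class (SSF, w*). -/
def toU (Q : List (SCRPQ α V)) : List (CRPQ α V) := Q.map SCRPQ.toCRPQ

/-- Satisfaction for UCRPQs of the class (SSF, w*). -/
def SatS (Q : List (SCRPQ α V)) [Finite V] (G : GDB α) : Prop := Sat (toU Q) G

/-- `AtomLang.cut m`: replace `w*` with `w^{≤m} = {w^n : n ≤ m}`; SSF atoms unchanged. -/
def AtomLang.cut (m : ℕ) : AtomLang α → AtomLang α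
  | .ssf L h => .ssf L h
  | .star w => .ssf (wpow w '' Set.Iic m) ((Set.finite_Iic m).image _)

/-- `q(m)` for a CRPQ: replace every expression `w*` with `w^{≤m}`. -/
def SCRPQ.cut (m : ℕ) (q : SCRPQ α V) : SCRPQ α V :=
  ⟨q.k, q.src, fun i => (q.lang i).cut m, q.tgt⟩

/-- `q(m)` for a UCRPQ: replace every expression `w*` with `w^{≤m}`. -/
def qcut (Q : List (SCRPQ α V)) (m : ℕ) : List (SCRPQ α V) := Q.map (SCRPQ.cut m)

/-- `‖Q‖`: number of atoms of the UCRPQ `Q`. -/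
def natoms (Q : List (SCRPQ α V)) : ℕ := (Q.map SCRPQ.k).sum

/-- The set `W` of words `w` such that `w*` labels a recursive atom of `Q`. -/
def recWords (Q : List (SCRPQ α V)) : Set (List α) :=
  { w | ∃ q ∈ Q, ∃ i : Fin q.k, q.lang i = AtomLang.star w }

/-- `N`: the maximum length of a word in the language of a non-recursive atom of `Q`. -/
noncomputable def nrBound (Q : List (SCRPQ α V)) : ℕ :=
  sSup { n | ∃ q ∈ Q, ∃ i : Fin q.k, ∃ (L : Set (List α)) (h : L.Finite),
    q.lang i = AtomLang.ssf L h ∧ ∃ u ∈ L, u.length = n }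

/-- `Z := ‖Q‖³ · N · |vars(Q)| · Π_{w ∈ W} |w|`. -/
noncomputable def Zbound (Q : List (SCRPQ α V)) [Fintype V] : ℕ :=
  natoms Q ^ 3 * nrBound Q * Fintype.card V * ∏ᶠ w ∈ recWords Q, w.length

/-- `Z⁺ := ‖Q‖ · Z + 1`. -/
noncomputable def Zplus (Q : List (SCRPQ α V)) [Fintype V] : ℕ :=
  natoms Q * Zbound Q + 1

/-! ## Letter-boundedness -/

/-- Membership in the class UCRPQ(SSF, a*): atoms are SSF or `a*` for a letter `a`. -/
def AtomLang.inSSFaStar : AtomLang α → Prop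
  | .ssf _ _ => True
  | .star w => ∃ a, w = [a]

/-- Membership in the class UCRPQ(a, a*): every atom language is `{a}` or `{a}*`
for a letter `a`. -/
def AtomLang.in_a_aStar : AtomLang α → Prop
  | .ssf L _ => ∃ a : α, L = {[a]}
  | .star w => ∃ a, w = [a]

/-- An atom language which is an SSF expression or `a*` only for letters `a ∉ A`. -/
def AtomLang.okOutside (A : Set α) : AtomLang α → Prop
  | .ssf _ _ => True
  | .star w => ∃ a, a ∉ A ∧ w = [a]

open Classical in
/-- Replace `a*` with `a^{≤m} = {ε, a, …, a^m}` for every letter `a ∈ A`. -/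
noncomputable def AtomLang.restrict (A : Set α) (m : ℕ) : AtomLang α → AtomLang α
  | .ssf L h => .ssf L h
  | .star w => if ∃ a ∈ A, w = [a]
      then .ssf (wpow w '' Set.Iic m) ((Set.finite_Iic m).image _)
      else .star w

/-- `q(A, m)` (also `q[A ↦ m]`) for a CRPQ. -/
noncomputable def SCRPQ.restrict (A : Set α) (m : ℕ) (q : SCRPQ α V) : SCRPQ α V :=
  ⟨q.k, q.src, fun i => (q.lang i).restrict A m, q.tgt⟩

/-- `Q(A, m)` (also `Q[A ↦ m]`): the result of replacing in `Q` every atom language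
`a*` with `a ∈ A` by `a^{≤m}`. -/
noncomputable def qrestrict (Q : List (SCRPQ α V)) (A : Set α) (m : ℕ) :
    List (SCRPQ α V) := Q.map (SCRPQ.restrict A m)

/-- `Q` is `A`-bounded: `Q` is equivalent to some UCRPQ whose atom languages are SSF
expressions or expressions `a*` only for letters `a ∉ A`. -/
def BddIn (Q : List (SCRPQ α V)) [Finite V] (A : Set α) : Prop :=
  ∃ (n : ℕ) (Q' : List (SCRPQ α (Fin n))),
    (∀ d ∈ Q', ∀ i : Fin d.k, (d.lang i).okOutside A) ∧ QEquiv (SatS Q) (SatS Q')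


/-! ## Auxiliary development -/

section Aux

variable {α V : Type}

lemma wpow_single (a : α) (n : ℕ) : wpow [a] n = List.replicate n a := by
  induction n with
  | zero => rfl
  | succ n ih =>
    rw [wpow, List.replicate_succ, List.flatten_cons, ← wpow, ih,
      List.replicate_succ]
    rfl

lemma wpow_single_length (a : α) (n : ℕ) : (wpow [a] n).length = n := by
  simp [wpow_single]

/-- Composition of a CQ-hom with a hom into a GDB. -/
lemma CQ.homToG_of_hom {p p' : CQ α} {h : p.V → p'.V} (hp : p.Hom p' h) {G : GDB α}
    (hG : p'.homToG G) : p.homToG G := by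
  obtain ⟨g, hg⟩ := hG
  exact ⟨g ∘ h, fun x a y hx => hg _ _ _ (hp _ _ _ hx)⟩

/-- A CQ viewed as a graph database. -/
def CQ.toGDB (p : CQ α) : GDB α := ⟨p.V, p.finV, p.atoms⟩

lemma CQ.homToG_toGDB_self (p : CQ α) : p.homToG p.toGDB :=
  ⟨id, fun _ _ _ hx => hx⟩

/-- Walk shortening: every walk can be shortened to one with pairwise distinct
vertices and the same endpoints. -/
lemma walk_shorten {β : Type} (R : β → β → Prop) :
    ∀ n : ℕ, ∀ f : ℕ → β, (∀ j < n, R (f j) (f (j + 1))) →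
    ∃ n' ≤ n, ∃ f' : ℕ → β, (∀ j < n', R (f' j) (f' (j + 1))) ∧
      f' 0 = f 0 ∧ f' n' = f n ∧
      ∀ j1 ≤ n', ∀ j2 ≤ n', f' j1 = f' j2 → j1 = j2 := by
  intro n
  induction n using Nat.strong_induction_on with
  | _ n IH =>
    intro f hf
    by_cases hinj : ∃ p q, p < q ∧ q ≤ n ∧ f p = f q
    · obtain ⟨p, q, hpq, hqn, hfeq⟩ := hinj
      set g : ℕ → β := fun j => f (if j ≤ p then j else j + (q - p)) with hg
      have hlt : n - (q - p) < n := by omega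
      have geval : ∀ j, g j = f (if j ≤ p then j else j + (q - p)) := fun j => rfl
      have hgw : ∀ j < n - (q - p), R (g j) (g (j + 1)) := by
        intro j hj
        rcases lt_trichotomy j p with h | h | h
        · rw [geval, geval, if_pos (by omega), if_pos (by omega)]
          exact hf j (by omega)
        · subst h
          rw [geval, geval, if_pos (le_refl _), if_neg (by omega), hfeq]
          have : j + 1 + (q - j) = q + 1 := by omega
          rw [this]; exact hf q (by omega)
        · rw [geval, geval, if_neg (by omega), if_neg (by omega)]
          have : j + 1 + (q - p) = j + (q - p) + 1 := by omega
          rw [this]; exact hf _ (by omega)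
      obtain ⟨n', hn', f', hf', h0, hend, hinj'⟩ := IH _ hlt g hgw
      refine ⟨n', by omega, f', hf', ?_, ?_, hinj'⟩
      · rw [h0, geval, if_pos (Nat.zero_le _)]
      · rw [hend, geval]
        by_cases hc : n - (q - p) ≤ p
        · rw [if_pos hc]
          have hqn' : q = n := by omega
          have hp : n - (q - p) = p := by omega
          rw [hp, hfeq, hqn']
        · rw [if_neg hc]
          congr 1; omega
    · push_neg at hinj
      refine ⟨n, le_refl n, f, hf, rfl, rfl, ?_⟩
      intro j1 h1 j2 h2 hfe
      by_contra hne
      rcases lt_or_gt_of_ne hne with h | h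
      · exact absurd hfe (hinj j1 j2 h h2)
      · exact absurd hfe.symm (hinj j2 j1 h h1)

end Aux

section Aux2

variable {α V : Type}

lemma node_zero (q : CRPQ α V) (w : Fin q.k → List α) (i : Fin q.k) :
    node q w i 0 = Sum.inl (q.src i) := by simp [node]; rfl

lemma node_last (q : CRPQ α V) (w : Fin q.k → List α) (i : Fin q.k)
    (h : (w i).length ≠ 0) : node q w i ((w i).length) = Sum.inl (q.tgt i) := by
  simp [node, h]; rfl

lemma node_mid (q : CRPQ α V) (w : Fin q.k → List α) (i : Fin q.k) {j : ℕ}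
    (h0 : j ≠ 0) (h : j < (w i).length) :
    node q w i j = Sum.inr ⟨i, ⟨j - 1, by omega⟩⟩ := by
  exact (if_neg h0).trans ((if_neg (show j ≠ (w i).length by omega)).trans
    (dif_pos (show j - 1 < (w i).length - 1 by omega)))

lemma expansion_atom_mem (q : CRPQ α V) [Finite V] (w : Fin q.k → List α)
    (i : Fin q.k) (j : ℕ) (hj : j < (w i).length) :
    (Quot.mk _ (node q w i j), (w i).get ⟨j, hj⟩, Quot.mk _ (node q w i (j + 1)))
      ∈ (expansion q w).atoms := ⟨i, j, hj, rfl⟩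

lemma quot_eps (q : CRPQ α V) (w : Fin q.k → List α) (i : Fin q.k)
    (hw : w i = []) :
    Quot.mk (eqRel q w) (Sum.inl (q.src i)) = Quot.mk _ (Sum.inl (q.tgt i)) :=
  Quot.sound ⟨i, hw, rfl, rfl⟩

lemma AtomLang.restrict_language_subset (l : AtomLang α) (A : Set α) (m : ℕ) :
    (l.restrict A m).language ⊆ l.language := by
  cases l with
  | ssf L h => exact fun u hu => hu
  | star w =>
    rw [AtomLang.restrict]
    split_ifs with hc
    · rintro u ⟨n, hn, rfl⟩
      exact ⟨n, rfl⟩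
    · exact fun u hu => hu

lemma expansion_restrict (s : SCRPQ α V) [Finite V] (A : Set α) (m : ℕ)
    (w : Fin s.k → List α) :
    expansion (SCRPQ.restrict A m s).toCRPQ w = expansion s.toCRPQ w := rfl

/-- Easy direction: `q(A,m) ⊑ q`. -/
lemma sat_qrestrict_imp (q : List (SCRPQ α V)) [Finite V] (A : Set α) (m : ℕ)
    (G : GDB α) (h : SatS (qrestrict q A m) G) : SatS q G := by
  obtain ⟨p, ⟨d, hd, w, hw, hp⟩, hhom⟩ := h
  rw [toU, List.mem_map] at hd
  obtain ⟨s', hs', rfl⟩ := hd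
  rw [qrestrict, List.mem_map] at hs'
  obtain ⟨s, hs, rfl⟩ := hs'
  refine ⟨p, ⟨s.toCRPQ, List.mem_map_of_mem hs, w, ?_, hp⟩, hhom⟩
  intro i
  exact AtomLang.restrict_language_subset _ A m (hw i)

end Aux2

section Aux3

variable {α V V₂ : Type}

/-- Rename the variables of an SCRPQ. -/
def SCRPQ.rename (e : V → V₂) (s : SCRPQ α V) : SCRPQ α V₂ :=
  ⟨s.k, e ∘ s.src, s.lang, e ∘ s.tgt⟩

lemma expansion_rename_hom [Finite V] [Finite V₂] (s : SCRPQ α V) (e : V → V₂)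
    (w : Fin s.k → List α) :
    (expansion s.toCRPQ w).homTo (expansion (s.rename e).toCRPQ w) := by
  classical
  set ρ : RawVar s.toCRPQ w → RawVar (s.rename e).toCRPQ w :=
    fun x => match x with
      | .inl v => .inl (e v)
      | .inr z => .inr z with hρ
  have hsound : ∀ x y, eqRel s.toCRPQ w x y →
      Quot.mk (eqRel (s.rename e).toCRPQ w) (ρ x) = Quot.mk _ (ρ y) := by
    rintro x y ⟨i, hwi, rfl, rfl⟩
    exact Quot.sound ⟨i, hwi, rfl, rfl⟩
  refine ⟨Quot.lift (fun x => Quot.mk _ (ρ x)) hsound, ?_⟩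
  have hnode : ∀ (i : Fin s.k) (j : ℕ),
      ρ (node s.toCRPQ w i j) = node (s.rename e).toCRPQ w i j := by
    intro i j
    by_cases h1 : j = 0
    · subst h1; exact (congrArg ρ (node_zero s.toCRPQ w i)).trans (node_zero (s.rename e).toCRPQ w i).symm
    by_cases h2 : j = (w i).length
    · subst h2; exact (congrArg ρ (node_last s.toCRPQ w i h1)).trans (node_last (s.rename e).toCRPQ w i h1).symm
    by_cases h3 : j < (w i).length
    · exact (congrArg ρ (node_mid s.toCRPQ w i h1 h3)).trans (node_mid (s.rename e).toCRPQ w i h1 h3).symm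
    have e1 : node s.toCRPQ w i j = Sum.inl (s.toCRPQ.src i) := (if_neg h1).trans
      ((if_neg h2).trans (dif_neg (show ¬ (j - 1 < (w i).length - 1) by omega)))
    have e2 : node (s.rename e).toCRPQ w i j = Sum.inl ((s.rename e).toCRPQ.src i) :=
      (if_neg h1).trans ((if_neg h2).trans (dif_neg (show ¬ (j - 1 < (w i).length - 1) by omega)))
    exact (congrArg ρ e1).trans e2.symm
  rintro x a y ⟨i, j, hj, heq⟩
  replace heq := And.imp_right Prod.mk.inj (Prod.mk.inj heq)
  obtain ⟨hx, ha, hy⟩ := heq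
  subst hx; subst ha; subst hy
  show (Quot.mk _ (ρ (node s.toCRPQ w i j)), _, Quot.mk _ (ρ (node s.toCRPQ w i (j+1))))
    ∈ (expansion (s.rename e).toCRPQ w).atoms
  exact ⟨i, j, hj, congrArg₂ Prod.mk (congrArg (Quot.mk _) (hnode i j))
    (congrArg (Prod.mk _) (congrArg (Quot.mk _) (hnode i (j + 1))))⟩

lemma expansion_rename_hom_inv [Finite V] [Finite V₂] (s : SCRPQ α V) (e : V ≃ V₂)
    (w : Fin s.k → List α) :
    (expansion (s.rename e).toCRPQ w).homTo (expansion s.toCRPQ w) := by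
  classical
  set ρ : RawVar (s.rename e).toCRPQ w → RawVar s.toCRPQ w :=
    fun x => match x with
      | .inl v => .inl (e.symm v)
      | .inr z => .inr z with hρ
  have hsound : ∀ x y, eqRel (s.rename e).toCRPQ w x y →
      Quot.mk (eqRel s.toCRPQ w) (ρ x) = Quot.mk _ (ρ y) := by
    rintro x y ⟨i, hwi, rfl, rfl⟩
    have h1 : ρ (Sum.inl ((s.rename e).toCRPQ.src i)) = Sum.inl (s.toCRPQ.src i) := by
      show Sum.inl (e.symm (e (s.src i))) = _
      simp [SCRPQ.toCRPQ]
    have h2 : ρ (Sum.inl ((s.rename e).toCRPQ.tgt i)) = Sum.inl (s.toCRPQ.tgt i) := by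
      show Sum.inl (e.symm (e (s.tgt i))) = _
      simp [SCRPQ.toCRPQ]
    rw [h1, h2]
    exact Quot.sound ⟨i, hwi, rfl, rfl⟩
  refine ⟨Quot.lift (fun x => Quot.mk _ (ρ x)) hsound, ?_⟩
  have hnode : ∀ (i : Fin s.k) (j : ℕ),
      ρ (node (s.rename e).toCRPQ w i j) = node s.toCRPQ w i j := by
    intro i j
    by_cases h1 : j = 0
    · subst h1
      refine (congrArg ρ (node_zero (s.rename e).toCRPQ w i)).trans (Eq.trans ?_ (node_zero s.toCRPQ w i).symm)
      show Sum.inl (e.symm (e (s.src i))) = _; simp [SCRPQ.toCRPQ]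
    by_cases h2 : j = (w i).length
    · subst h2
      refine (congrArg ρ (node_last (s.rename e).toCRPQ w i h1)).trans (Eq.trans ?_ (node_last s.toCRPQ w i h1).symm)
      show Sum.inl (e.symm (e (s.tgt i))) = _; simp [SCRPQ.toCRPQ]
    by_cases h3 : j < (w i).length
    · exact (congrArg ρ (node_mid (s.rename e).toCRPQ w i h1 h3)).trans (node_mid s.toCRPQ w i h1 h3).symm
    have e1 : node (s.rename e).toCRPQ w i j = Sum.inl ((s.rename e).toCRPQ.src i) :=
      (if_neg h1).trans ((if_neg h2).trans (dif_neg (show ¬ (j - 1 < (w i).length - 1) by omega)))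
    have e2 : node s.toCRPQ w i j = Sum.inl (s.toCRPQ.src i) := (if_neg h1).trans
      ((if_neg h2).trans (dif_neg (show ¬ (j - 1 < (w i).length - 1) by omega)))
    refine (congrArg ρ e1).trans (Eq.trans ?_ e2.symm)
    show Sum.inl (e.symm (e (s.src i))) = _; simp [SCRPQ.toCRPQ]
  rintro x a y ⟨i, j, hj, heq⟩
  replace heq := And.imp_right Prod.mk.inj (Prod.mk.inj heq)
  obtain ⟨hx, ha, hy⟩ := heq
  subst hx; subst ha; subst hy
  show (Quot.mk _ (ρ (node (s.rename e).toCRPQ w i j)), _,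
      Quot.mk _ (ρ (node (s.rename e).toCRPQ w i (j+1)))) ∈ (expansion s.toCRPQ w).atoms
  exact ⟨i, j, hj, congrArg₂ Prod.mk (congrArg (Quot.mk _) (hnode i j))
    (congrArg (Prod.mk _) (congrArg (Quot.mk _) (hnode i (j + 1))))⟩

lemma rename_rename_symm (e : V ≃ V₂) (s : SCRPQ α V) :
    (s.rename e).rename e.symm = s := by
  cases s with
  | mk k src lang tgt =>
    rw [SCRPQ.rename, SCRPQ.rename]
    simp only [SCRPQ.mk.injEq, heq_eq_eq, true_and]
    constructor
    · funext v; simp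
    · funext v; simp

lemma sat_rename_iff (Q : List (SCRPQ α V)) [Finite V] [Finite V₂] (e : V ≃ V₂)
    (G : GDB α) : SatS (Q.map (SCRPQ.rename e)) G ↔ SatS Q G := by
  constructor
  · rintro ⟨p, ⟨d, hd, w, hw, rfl⟩, hhom⟩
    rw [toU, List.mem_map] at hd
    obtain ⟨s', hs', rfl⟩ := hd
    rw [List.mem_map] at hs'
    obtain ⟨s, hs, rfl⟩ := hs'
    obtain ⟨h, hh⟩ := expansion_rename_hom s e w
    exact ⟨expansion s.toCRPQ w,
      ⟨s.toCRPQ, List.mem_map_of_mem hs, w, hw, rfl⟩,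
      CQ.homToG_of_hom hh hhom⟩
  · rintro ⟨p, ⟨d, hd, w, hw, rfl⟩, hhom⟩
    rw [toU, List.mem_map] at hd
    obtain ⟨s, hs, rfl⟩ := hd
    obtain ⟨h, hh⟩ := expansion_rename_hom_inv s e w
    refine ⟨expansion (s.rename e).toCRPQ w,
      ⟨(s.rename e).toCRPQ,
        List.mem_map_of_mem (List.mem_map_of_mem hs), w, hw, rfl⟩,
      CQ.homToG_of_hom hh hhom⟩

end Aux3

section Aux4

variable {α V W : Type}

lemma ssf_length_le_nrBound (Q' : List (SCRPQ α W)) {d : SCRPQ α W} (hd : d ∈ Q')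
    (i : Fin d.k) {L : Set (List α)} {h : L.Finite}
    (hL : d.lang i = AtomLang.ssf L h) {u : List α} (hu : u ∈ L) :
    u.length ≤ nrBound Q' := by
  classical
  have hfin : {n | ∃ q ∈ Q', ∃ i : Fin q.k, ∃ (L : Set (List α)) (hh : L.Finite),
      q.lang i = AtomLang.ssf L hh ∧ ∃ u ∈ L, u.length = n}.Finite := by
    have hsub : {n | ∃ q ∈ Q', ∃ i : Fin q.k, ∃ (L : Set (List α)) (hh : L.Finite),
        q.lang i = AtomLang.ssf L hh ∧ ∃ u ∈ L, u.length = n} ⊆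
        ⋃ q ∈ {x | x ∈ Q'}, ⋃ i : Fin q.k,
          {n | ∃ (L : Set (List α)) (hh : L.Finite),
            q.lang i = AtomLang.ssf L hh ∧ ∃ u ∈ L, u.length = n} := by
      rintro n ⟨q, hq, i, L2, h2, hL2, u2, hu2, rfl⟩
      simp only [Set.mem_iUnion, Set.mem_setOf_eq]
      exact ⟨q, hq, i, L2, h2, hL2, u2, hu2, rfl⟩
    refine Set.Finite.subset ?_ hsub
    refine Set.Finite.biUnion (List.finite_toSet Q') (fun q _ => ?_)
    refine Set.finite_iUnion (fun i => ?_)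
    rcases hql : q.lang i with ⟨L', h'⟩ | w0
    · refine (h'.image List.length).subset ?_
      rintro n ⟨L2, h2, heq, u2, hu2, rfl⟩
      injection heq with heq1
      subst heq1
      exact ⟨u2, hu2, rfl⟩
    · refine Set.Finite.subset (Set.finite_empty) ?_
      rintro n ⟨L2, h2, heq, _⟩
      exact absurd heq (by simp)
  exact le_csSup hfin.bddAbove ⟨d, hd, i, L, h, hL, u, hu, rfl⟩

lemma natoms_le (Q' : List (SCRPQ α W)) {d : SCRPQ α W} (hd : d ∈ Q') :
    d.k ≤ natoms Q' :=
  List.single_le_sum (fun x _ => Nat.zero_le x) _ (List.mem_map_of_mem (f := SCRPQ.k) hd)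

/-- Uniform bound on `a`-walks (for `a ∈ A`) in expansions of a query whose
atom languages are SSF or `b*` with `b ∉ A`. -/
lemma expansion_walk_bound [Finite W] (Q' : List (SCRPQ α W)) (A : Set α)
    (hok : ∀ d ∈ Q', ∀ i : Fin d.k, (d.lang i).okOutside A)
    {F : CQ α} (hF : F ∈ ExpU (toU Q')) {a : α} (ha : a ∈ A)
    (n : ℕ) (f : ℕ → F.V) (hwalk : ∀ j < n, (f j, a, f (j + 1)) ∈ F.atoms) :
    ∃ n' ≤ natoms Q' * nrBound Q', ∃ f' : ℕ → F.V,
      f' 0 = f 0 ∧ f' n' = f n ∧ ∀ j < n', (f' j, a, f' (j + 1)) ∈ F.atoms := by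
  classical
  obtain ⟨q0, hq0, wq, hwq, rfl⟩ := hF
  rw [toU, List.mem_map] at hq0
  obtain ⟨s, hs, rfl⟩ := hq0
  obtain ⟨n₁, hn₁, f', hedges, h0, hend, hinj⟩ :=
    walk_shorten (fun x y => (x, a, y) ∈ (expansion s.toCRPQ wq).atoms) n f hwalk
  refine ⟨n₁, ?_, f', h0, hend, hedges⟩
  -- bound n₁
  have hmem : ∀ j : Fin n₁, ∃ (i : Fin s.toCRPQ.k) (jj : ℕ)
      (hjj : jj < (wq i).length),
      (f' j.1, a, f' (j.1 + 1)) = (Quot.mk _ (node s.toCRPQ wq i jj),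
        (wq i).get ⟨jj, hjj⟩, Quot.mk _ (node s.toCRPQ wq i (jj + 1))) :=
    fun j => hedges j.1 j.isLt
  choose ii jj hjj heq using hmem
  have hletter : ∀ j : Fin n₁, (wq (ii j)).get ⟨jj j, hjj j⟩ = a := by
    intro j
    have := congrArg (fun t => t.2.1) (heq j)
    exact this.symm
  have hb : ∀ j : Fin n₁, jj j < nrBound Q' := by
    intro j
    rcases hsl : s.lang (ii j) with ⟨L, hLf⟩ | w0
    · have hwm : wq (ii j) ∈ L := by
        have := hwq (ii j)
        rw [show s.toCRPQ.lang (ii j) = (s.lang (ii j)).language from rfl, hsl] at this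
        exact this
      have h1 := ssf_length_le_nrBound Q' hs (ii j) hsl hwm
      have h2 := hjj j
      omega
    · exfalso
      obtain ⟨b, hbA, rfl⟩ := by
        have := hok s hs (ii j)
        rw [hsl] at this
        exact this
      obtain ⟨nn, hnn⟩ := by
        have := hwq (ii j)
        rw [show s.toCRPQ.lang (ii j) = (s.lang (ii j)).language from rfl, hsl] at this
        exact this
      have hget := hletter j
      have hrep : wq (ii j) = List.replicate nn b := by rw [hnn, wpow_single]
      have hgb : (wq (ii j)).get ⟨jj j, hjj j⟩ = b := by
        rw [List.get_eq_getElem, List.getElem_of_eq hrep, List.getElem_replicate]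
      have : b = a := by rw [← hgb, hget]
      subst this
      exact hbA ha
  set φ : Fin n₁ → Fin s.toCRPQ.k × Fin (nrBound Q') :=
    fun j => (ii j, ⟨jj j, hb j⟩) with hφ
  have hφinj : Function.Injective φ := by
    intro j1 j2 hj
    rw [hφ, Prod.mk.injEq] at hj
    obtain ⟨hi, hjjj⟩ := hj
    have hjjj' : jj j1 = jj j2 := congrArg Fin.val hjjj
    have hv1 : f' j1.1 = Quot.mk _ (node s.toCRPQ wq (ii j1) (jj j1)) :=
      congrArg (fun t => t.1) (heq j1)
    have hv2 : f' j2.1 = Quot.mk _ (node s.toCRPQ wq (ii j2) (jj j2)) :=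
      congrArg (fun t => t.1) (heq j2)
    have : f' j1.1 = f' j2.1 := by rw [hv1, hv2, hi, hjjj']
    have := hinj j1.1 (le_of_lt j1.isLt) j2.1 (le_of_lt j2.isLt) this
    exact Fin.ext this
  have hcard := Fintype.card_le_of_injective φ hφinj
  simp only [Fintype.card_fin, Fintype.card_prod] at hcard
  calc n₁ ≤ s.toCRPQ.k * nrBound Q' := hcard
    _ ≤ natoms Q' * nrBound Q' := Nat.mul_le_mul_right _ (natoms_le Q' hs)

end Aux4

section Aux5

variable {α V : Type}

lemma get_of_replicate_eq {l : List α} {nn : ℕ} {a : α}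
    (h : l = List.replicate nn a) (j : ℕ) (hj : j < l.length) :
    l.get ⟨j, hj⟩ = a := by
  rw [List.get_eq_getElem, List.getElem_of_eq h, List.getElem_replicate]

lemma main_construction [Finite V] (s : SCRPQ α V) (A : Set α) (m : ℕ) (F : CQ α)
    (hFb : ∀ a ∈ A, ∀ (n : ℕ) (f : ℕ → F.V),
      (∀ j < n, (f j, a, f (j + 1)) ∈ F.atoms) →
      ∃ n' ≤ m, ∃ f' : ℕ → F.V, f' 0 = f 0 ∧ f' n' = f n ∧
        ∀ j < n', (f' j, a, f' (j + 1)) ∈ F.atoms)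
    (w : Fin s.k → List α) (hw : ∀ i, w i ∈ s.toCRPQ.lang i)
    (g : (expansion s.toCRPQ w).V → F.V)
    (hg : ∀ x a y, (x, a, y) ∈ (expansion s.toCRPQ w).atoms →
      (g x, a, g y) ∈ F.atoms) :
    ∃ w' : Fin s.k → List α,
      (∀ i, w' i ∈ ((s.lang i).restrict A m).language) ∧
      ∃ h, CQ.Hom (expansion s.toCRPQ w') F h := by
  classical
  -- a helper for the target endpoint
  have hgsl : ∀ i : Fin s.k,
      g (Quot.mk _ (Sum.inl (s.toCRPQ.tgt i))) =
      g (Quot.mk _ (node s.toCRPQ w i ((w i).length))) := by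
    intro i
    by_cases hz : (w i).length = 0
    · rw [hz, node_zero s.toCRPQ w i]
      exact congrArg g (quot_eps s.toCRPQ w i (List.length_eq_zero_iff.mp hz)).symm
    · rw [node_last s.toCRPQ w i hz]
  -- Step 1: per-atom replacement words and walks
  have claim : ∀ i : Fin s.k, ∃ (u : List α) (v : ℕ → F.V),
      u ∈ ((s.lang i).restrict A m).language ∧
      v 0 = g (Quot.mk _ (node s.toCRPQ w i 0)) ∧
      v u.length = g (Quot.mk _ (node s.toCRPQ w i ((w i).length))) ∧
      ∀ j, ∀ hj : j < u.length, (v j, u.get ⟨j, hj⟩, v (j + 1)) ∈ F.atoms := by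
    intro i
    by_cases hc : ∃ a ∈ A, s.lang i = AtomLang.star [a]
    · obtain ⟨a, haA, hsl⟩ := hc
      obtain ⟨nn, hnn⟩ : ∃ nn, w i = wpow [a] nn := by
        have := hw i
        rw [show s.toCRPQ.lang i = (s.lang i).language from rfl, hsl] at this
        exact this
      have hrep : w i = List.replicate nn a := by rw [hnn, wpow_single]
      have wlen : (w i).length = nn := by rw [hrep, List.length_replicate]
      set f : ℕ → F.V := fun j => g (Quot.mk _ (node s.toCRPQ w i j)) with hf
      have hwalk : ∀ j < nn, (f j, a, f (j + 1)) ∈ F.atoms := by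
        intro j hj
        have hj' : j < (w i).length := by omega
        have hmem := hg _ _ _ (expansion_atom_mem s.toCRPQ w i j hj')
        rwa [get_of_replicate_eq hrep j hj'] at hmem
      obtain ⟨n', hn'm, f', hf0, hfend, hfedges⟩ := hFb a haA nn f hwalk
      have hulen : (wpow [a] n').length = n' := wpow_single_length a n'
      refine ⟨wpow [a] n', f', ?_, ?_, ?_, ?_⟩
      · rw [hsl, AtomLang.restrict, if_pos ⟨a, haA, rfl⟩]
        exact ⟨n', hn'm, rfl⟩
      · rw [hf0]
      · rw [hulen, hfend, wlen]
      · intro j hj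
        rw [get_of_replicate_eq (wpow_single a n') j hj]
        exact hfedges j (by omega)
    · refine ⟨w i, fun j => g (Quot.mk _ (node s.toCRPQ w i j)), ?_, rfl, rfl, ?_⟩
      · rcases hsl : s.lang i with ⟨L, hLf⟩ | w0
        · have := hw i
          rw [show s.toCRPQ.lang i = (s.lang i).language from rfl, hsl] at this
          rw [AtomLang.restrict]
          exact this
        · rw [AtomLang.restrict, if_neg]
          · have := hw i
            rw [show s.toCRPQ.lang i = (s.lang i).language from rfl, hsl] at this
            exact this
          · rintro ⟨a, haA, rfl⟩
            exact hc ⟨a, haA, hsl⟩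
      · intro j hj
        exact hg _ _ _ (expansion_atom_mem s.toCRPQ w i j hj)
  choose u v hu hv0 hvend hedges using claim
  -- Step 2: the raw map
  set r : RawVar s.toCRPQ u → F.V := fun x =>
    match x with
    | .inl vx => g (Quot.mk _ (Sum.inl vx))
    | .inr z => v z.1 (z.2.1 + 1) with hr
  have hnodeval : ∀ i : Fin s.k, ∀ j ≤ (u i).length,
      r (node s.toCRPQ u i j) = v i j := by
    intro i j hj
    by_cases h0 : j = 0
    · subst h0
      rw [node_zero s.toCRPQ u i]
      show g (Quot.mk _ (Sum.inl (s.toCRPQ.src i))) = v i 0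
      rw [hv0 i, node_zero s.toCRPQ w i]
    · by_cases hlen : j = (u i).length
      · subst hlen
        rw [node_last s.toCRPQ u i h0]
        show g (Quot.mk _ (Sum.inl (s.toCRPQ.tgt i))) = v i (u i).length
        rw [hgsl i, hvend i]
      · have hjlt : j < (u i).length := by omega
        rw [node_mid s.toCRPQ u i h0 hjlt]
        show v i ((j - 1) + 1) = v i j
        congr 1
        omega
  have hsound : ∀ x y, eqRel s.toCRPQ u x y → r x = r y := by
    rintro x y ⟨i, hui, rfl, rfl⟩
    show g (Quot.mk _ (Sum.inl (s.toCRPQ.src i))) =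
      g (Quot.mk _ (Sum.inl (s.toCRPQ.tgt i)))
    have h1 : g (Quot.mk _ (Sum.inl (s.toCRPQ.src i))) = v i 0 := by
      rw [hv0 i, node_zero s.toCRPQ w i]
    have h2 : v i 0 = v i ((u i).length) := by rw [hui]; rfl
    rw [h1, h2, hvend i, hgsl i]
  refine ⟨u, hu, Quot.lift r hsound, ?_⟩
  rintro x a y ⟨i, j, hj, heq⟩
  replace heq := And.imp_right Prod.mk.inj (Prod.mk.inj heq)
  obtain ⟨hx, ha, hy⟩ := heq
  subst hx; subst ha; subst hy
  show (r (node s.toCRPQ u i j), (u i).get ⟨j, hj⟩, r (node s.toCRPQ u i (j + 1)))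
    ∈ F.atoms
  rw [hnodeval i j (le_of_lt hj), hnodeval i (j + 1) hj]
  exact hedges i j hj

end Aux5

section Aux6

variable {α V : Type}

/-- Forward direction: `A`-boundedness gives equivalence with some cut-off. -/
lemma bddIn_to_restrict [Finite V] (q : List (SCRPQ α V)) (A : Set α)
    (hB : BddIn q A) :
    ∃ m : ℕ, QEquiv (SatS q) (SatS (qrestrict q A m)) := by
  obtain ⟨n, Q', hok, heq⟩ := hB
  refine ⟨natoms Q' * nrBound Q', fun G => ⟨?_, sat_qrestrict_imp q A _ G⟩⟩
  intro hqG
  obtain ⟨F, hFmem, hFhom⟩ := (heq G).mp hqG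
  have hFsat : SatS Q' F.toGDB := ⟨F, hFmem, F.homToG_toGDB_self⟩
  obtain ⟨E, ⟨d, hd, w, hw, rfl⟩, hEhom⟩ := (heq F.toGDB).mpr hFsat
  rw [toU, List.mem_map] at hd
  obtain ⟨s, hs, rfl⟩ := hd
  obtain ⟨g, hg⟩ := hEhom
  obtain ⟨w', hw', h, hh⟩ := main_construction s A (natoms Q' * nrBound Q') F
    (fun a ha nn f hwalk => expansion_walk_bound Q' A hok hFmem ha nn f hwalk)
    w hw g hg
  exact ⟨expansion s.toCRPQ w',
    ⟨(SCRPQ.restrict A (natoms Q' * nrBound Q') s).toCRPQ,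
      List.mem_map_of_mem (List.mem_map_of_mem hs), w', hw',
      (expansion_restrict s A _ w').symm⟩,
    CQ.homToG_of_hom hh hFhom⟩

end Aux6
/-- a query `q ∈ UCRPQ(SSF, a*)` is `A`-bounded iff it is
equivalent to `q(A, m)` for some `m ∈ ℕ`. -/
theorem statement12 {α V : Type} [Fintype α] [Fintype V] (q : List (SCRPQ α V))
    (hclass : ∀ d ∈ q, ∀ i : Fin d.k, (d.lang i).inSSFaStar) (A : Set α) :
    BddIn q A ↔ ∃ m : ℕ, QEquiv (SatS q) (SatS (qrestrict q A m)) := by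
  constructor
  · exact bddIn_to_restrict q A
  · rintro ⟨m, heqm⟩
    classical
    refine ⟨Fintype.card V,
      (qrestrict q A m).map (SCRPQ.rename (Fintype.equivFin V)), ?_, ?_⟩
    · rintro d hd i
      rw [List.mem_map] at hd
      obtain ⟨s', hs', rfl⟩ := hd
      rw [qrestrict, List.mem_map] at hs'
      obtain ⟨s, hs, rfl⟩ := hs'
      show ((s.lang i).restrict A m).okOutside A
      rcases hsl : s.lang i with ⟨L, hLf⟩ | w0
      · rw [AtomLang.restrict]; trivial
      · rw [AtomLang.restrict]
        split_ifs with hcc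
        · trivial
        · have := hclass s hs i
          rw [hsl] at this
          obtain ⟨a, rfl⟩ := this
          refine ⟨a, fun haA => hcc ⟨a, haA, rfl⟩, rfl⟩
    · intro G
      rw [sat_rename_iff]
      exact heqm G

end Paper
end
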